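/- Let u be a nonzero real number, let Q be a natural number, and let g : ℕ → ℝ. Define c : ℕ → ℕ → ℝ by c(r,s) = (−2u)^(r+s−Q) · Σ_{R=0}^{Q} (R!·(Q−R)!/(r!·s!))·C(R,r)·C(Q−R,s)·g(R), where (−2u)^(r+s−Q) is the integer power of the nonzero real number −2u (with r+s−Q taken in ℤ, so negative exponents are allowed). Then for all natural numbers r and s: u·((r:ℝ)+s−Q)·c(r,s) − (1/2)·(r+1)²·c(r+1,s) − (1/2)·(s+1)²·c(r,s+1) = 0. That is, c satisfies the two-variable recurrence (3.9) with eigenvalue corresponding to E = (1+Q+h̃)√Λ a_*. -/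

import Mathlib

open Finset

lemma aux_choose (n k : ℕ) :
    ((k:ℝ)+1) * (Nat.choose n (k+1) : ℝ) = ((n:ℝ)-k) * (Nat.choose n k : ℝ) := by
  rcases le_or_gt k n with h | h
  · have h1 := Nat.choose_succ_right_eq n k
    have h2 : ((Nat.choose n (k+1) * (k+1) : ℕ) : ℝ) = ((Nat.choose n k * (n-k) : ℕ) : ℝ) := by
      rw [h1]
    push_cast [Nat.cast_sub h] at h2
    linarith
  · rw [Nat.choose_eq_zero_of_lt h, Nat.choose_eq_zero_of_lt (h.trans (Nat.lt_succ_self k))]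
    push_cast
    ring

theorem stmt_10 (u : ℝ) (hu : u ≠ 0) (Q : ℕ) (g : ℕ → ℝ) (c : ℕ → ℕ → ℝ)
    (hc : ∀ r s : ℕ, c r s =
      (-2 * u) ^ ((r : ℤ) + (s : ℤ) - (Q : ℤ)) *
        ∑ R ∈ Finset.range (Q + 1),
          ((Nat.factorial R : ℝ) * (Nat.factorial (Q - R) : ℝ))
              / ((Nat.factorial r : ℝ) * (Nat.factorial s : ℝ))
            * (Nat.choose R r : ℝ) * (Nat.choose (Q - R) s : ℝ) * g R) :
    ∀ r s : ℕ,
      u * ((r : ℝ) + (s : ℝ) - (Q : ℝ)) * c r s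
        - (1 / 2) * ((r : ℝ) + 1) ^ 2 * c (r + 1) s
        - (1 / 2) * ((s : ℝ) + 1) ^ 2 * c r (s + 1) = 0 := by
  intro r s
  have h2u : (-2 * u) ≠ 0 := by
    intro h
    apply hu
    linarith
  rw [hc r s, hc (r+1) s, hc r (s+1)]
  have e1 : (((r+1 : ℕ)) : ℤ) + (s:ℤ) - (Q:ℤ) = ((r:ℤ) + (s:ℤ) - (Q:ℤ)) + 1 := by push_cast; ring
  have e2 : ((r:ℤ)) + (((s+1:ℕ)):ℤ) - (Q:ℤ) = ((r:ℤ) + (s:ℤ) - (Q:ℤ)) + 1 := by push_cast; ring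
  rw [e1, e2, zpow_add_one₀ h2u]
  have key :
      u * ((r : ℝ) + (s : ℝ) - (Q : ℝ)) *
        (∑ R ∈ Finset.range (Q + 1),
          ((Nat.factorial R : ℝ) * (Nat.factorial (Q - R) : ℝ))
              / ((Nat.factorial r : ℝ) * (Nat.factorial s : ℝ))
            * (Nat.choose R r : ℝ) * (Nat.choose (Q - R) s : ℝ) * g R)
      + u * ((r : ℝ) + 1) ^ 2 *
        (∑ R ∈ Finset.range (Q + 1),
          ((Nat.factorial R : ℝ) * (Nat.factorial (Q - R) : ℝ))
              / ((Nat.factorial (r+1) : ℝ) * (Nat.factorial s : ℝ))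
            * (Nat.choose R (r+1) : ℝ) * (Nat.choose (Q - R) s : ℝ) * g R)
      + u * ((s : ℝ) + 1) ^ 2 *
        (∑ R ∈ Finset.range (Q + 1),
          ((Nat.factorial R : ℝ) * (Nat.factorial (Q - R) : ℝ))
              / ((Nat.factorial r : ℝ) * (Nat.factorial (s+1) : ℝ))
            * (Nat.choose R r : ℝ) * (Nat.choose (Q - R) (s+1) : ℝ) * g R) = 0 := by
    rw [Finset.mul_sum, Finset.mul_sum, Finset.mul_sum, ← Finset.sum_add_distrib,
      ← Finset.sum_add_distrib]
    apply Finset.sum_eq_zero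
    intro R hR
    have hRQ : R ≤ Q := Nat.lt_succ_iff.mp (Finset.mem_range.mp hR)
    have hQR : ((Q - R : ℕ) : ℝ) = (Q:ℝ) - R := by
      rw [Nat.cast_sub hRQ]
    have hr1 : ((r:ℝ)+1) ≠ 0 := by positivity
    have hs1 : ((s:ℝ)+1) ≠ 0 := by positivity
    have hx : (Nat.choose R (r+1) : ℝ) = ((R:ℝ)-r) * (Nat.choose R r : ℝ) / ((r:ℝ)+1) := by
      rw [eq_div_iff hr1]
      linear_combination aux_choose R r
    have hy : (Nat.choose (Q-R) (s+1) : ℝ)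
        = (((Q-R:ℕ):ℝ)-s) * (Nat.choose (Q-R) s : ℝ) / ((s:ℝ)+1) := by
      rw [eq_div_iff hs1]
      linear_combination aux_choose (Q-R) s
    rw [hx, hy, hQR, Nat.factorial_succ r, Nat.factorial_succ s]
    have hfr : ((Nat.factorial r : ℝ)) ≠ 0 := Nat.cast_ne_zero.mpr (Nat.factorial_ne_zero r)
    have hfs : ((Nat.factorial s : ℝ)) ≠ 0 := Nat.cast_ne_zero.mpr (Nat.factorial_ne_zero s)
    push_cast
    field_simp
    ring
  linear_combination ((-2*u) ^ ((r:ℤ) + (s:ℤ) - (Q:ℤ))) * key
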